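/- Arrows comparison: if V→R ⪯_{𝒱,Γ} ∀X⃗.(U→T), then there exist types A⃗ and type variables Y⃗ with Y⃗ ∉ FV(Γ) such that U→T ≡ (V→R)[A⃗/Y⃗]. -/

import Mathlib

/- Types of λvec_R: general types and unit types (mutual) -/
mutual
inductive UTy (S : Type) : Type where
  | uvar : ℕ → UTy S
  | arrow : UTy S → Ty S → UTy S
  | fallU : ℕ → UTy S → UTy S
  | fallG : ℕ → UTy S → UTy S
inductive Ty (S : Type) : Type where
  | unit : UTy S → Ty S
  | smul : S → Ty S → Ty S
  | add : Ty S → Ty S → Ty S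
  | gvar : ℕ → Ty S
end

/- Type equivalence: the smallest congruence with the weak-module axioms -/
mutual
inductive UEquiv {S : Type} [CommRing S] : UTy S → UTy S → Prop where
  | refl (U : UTy S) : UEquiv U U
  | symm : UEquiv U V → UEquiv V U
  | trans : UEquiv U V → UEquiv V W → UEquiv U W
  | arrow : UEquiv U V → TEquiv T R → UEquiv (.arrow U T) (.arrow V R)
  | fallU : UEquiv U V → UEquiv (.fallU X U) (.fallU X V)
  | fallG : UEquiv U V → UEquiv (.fallG X U) (.fallG X V)
inductive TEquiv {S : Type} [CommRing S] : Ty S → Ty S → Prop where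
  | refl (T : Ty S) : TEquiv T T
  | symm : TEquiv T R → TEquiv R T
  | trans : TEquiv T R → TEquiv R P → TEquiv T P
  | unit : UEquiv U V → TEquiv (.unit U) (.unit V)
  | smul : TEquiv T R → TEquiv (.smul a T) (.smul a R)
  | addL : TEquiv T R → TEquiv (.add T P) (.add R P)
  | addR : TEquiv T R → TEquiv (.add P T) (.add P R)
  | one_smul (T : Ty S) : TEquiv (.smul 1 T) T
  | smul_smul : TEquiv (.smul a (.smul b T)) (.smul (a*b) T)
  | smul_add : TEquiv (.add (.smul a T) (.smul a R)) (.smul a (.add T R))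
  | add_smul : TEquiv (.add (.smul a T) (.smul b T)) (.smul (a+b) T)
  | comm : TEquiv (.add T R) (.add R T)
  | assoc : TEquiv (.add T (.add R P)) (.add (.add T R) P)
end

/- substitution of a unit type variable by a unit type -/
mutual
def UTy.substU {S : Type} : UTy S → ℕ → UTy S → UTy S
  | .uvar m, X, A => if m = X then A else .uvar m
  | .arrow U T, X, A => .arrow (U.substU X A) (T.substU X A)
  | .fallU m U, X, A => if m = X then .fallU m U else .fallU m (U.substU X A)
  | .fallG m U, X, A => .fallG m (U.substU X A)
def Ty.substU {S : Type} : Ty S → ℕ → UTy S → Ty S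
  | .unit U, X, A => .unit (U.substU X A)
  | .smul a T, X, A => .smul a (T.substU X A)
  | .add T R, X, A => .add (T.substU X A) (R.substU X A)
  | .gvar m, _, _ => .gvar m
end

/- substitution of a general type variable by a general type -/
mutual
def UTy.substG {S : Type} : UTy S → ℕ → Ty S → UTy S
  | .uvar m, _, _ => .uvar m
  | .arrow U T, X, A => .arrow (U.substG X A) (T.substG X A)
  | .fallU m U, X, A => .fallU m (U.substG X A)
  | .fallG m U, X, A => if m = X then .fallG m U else .fallG m (U.substG X A)
def Ty.substG {S : Type} : Ty S → ℕ → Ty S → Ty S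
  | .unit U, X, A => .unit (U.substG X A)
  | .smul a T, X, A => .smul a (T.substG X A)
  | .add T R, X, A => .add (T.substG X A) (R.substG X A)
  | .gvar m, X, A => if m = X then A else .gvar m
end

/- free type variables; a variable is (false, n) for a unit variable X_n
   and (true, n) for a general variable 𝕏_n -/
mutual
def UTy.fv {S : Type} : UTy S → Set (Bool × ℕ)
  | .uvar n => {(false, n)}
  | .arrow U T => U.fv ∪ T.fv
  | .fallU n U => U.fv \ {(false, n)}
  | .fallG n U => U.fv \ {(true, n)}
def Ty.fv {S : Type} : Ty S → Set (Bool × ℕ)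
  | .unit U => U.fv
  | .smul _ T => T.fv
  | .add T R => T.fv ∪ R.fv
  | .gvar n => {(true, n)}
end
/- a single substitution item: a type variable together with a type of the matching kind -/
inductive TSub (S : Type) : Type where
  | u : ℕ → UTy S → TSub S
  | g : ℕ → Ty S → TSub S

def TSub.var {S : Type} : TSub S → Bool × ℕ
  | .u X _ => (false, X)
  | .g X _ => (true, X)

def Ty.applySub {S : Type} : Ty S → TSub S → Ty S
  | T, .u X A => T.substU X A
  | T, .g X A => T.substG X A

def UTy.applySub {S : Type} : UTy S → TSub S → UTy S
  | U, .u X A => U.substU X A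
  | U, .g X A => U.substG X A

def Ty.applySubs {S : Type} (T : Ty S) (σ : List (TSub S)) : Ty S := σ.foldl Ty.applySub T
def UTy.applySubs {S : Type} (U : UTy S) (σ : List (TSub S)) : UTy S := σ.foldl UTy.applySub U

/- ∀X.U for a variable of either kind, and iterated foralls -/
def mkForall {S : Type} (X : Bool × ℕ) (U : UTy S) : UTy S :=
  if X.1 then .fallG X.2 U else .fallU X.2 U
def mkForalls {S : Type} (Xs : List (Bool × ℕ)) (U : UTy S) : UTy S := Xs.foldr mkForall U

/- the linear combination Σᵢ αᵢ·Tᵢ represented by a (nonempty) list of pairs -/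
def combo {S : Type} : List (S × Ty S) → Ty S
  | [] => .gvar 0
  | [p] => .smul p.1 p.2
  | p :: q :: L => .add (.smul p.1 p.2) (combo (q :: L))

/- sum of the scalars of a linear combination -/
def weightOf {S : Type} [CommRing S] {α : Type} (L : List (S × α)) : S := (L.map Prod.fst).sum

/- Terms of λvec_R -/
inductive Term (S : Type) : Type where
  | var : ℕ → Term S
  | lam : ℕ → Term S → Term S
  | app : Term S → Term S → Term S
  | smul : S → Term S → Term S
  | add : Term S → Term S → Term S

/- basis terms: variables and abstractions -/
inductive IsBasis {S : Type} : Term S → Prop where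
  | var : IsBasis (.var x)
  | lam : IsBasis (.lam x t)

def Term.fv {S : Type} : Term S → Set ℕ
  | .var x => {x}
  | .lam x t => t.fv \ {x}
  | .app t r => t.fv ∪ r.fv
  | .smul _ t => t.fv
  | .add t r => t.fv ∪ r.fv

/- term substitution t[b/x] -/
def Term.subst {S : Type} : Term S → ℕ → Term S → Term S
  | .var y, x, b => if y = x then b else .var y
  | .lam y t, x, b => if y = x then .lam y t else .lam y (t.subst x b)
  | .app t r, x, b => .app (t.subst x b) (r.subst x b)
  | .smul a t, x, b => .smul a (t.subst x b)
  | .add t r, x, b => .add (t.subst x b) (r.subst x b)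

/- typing contexts: partial maps from term variables to unit types -/
def Ctx (S : Type) : Type := ℕ → Option (UTy S)

def Ctx.update {S : Type} (Γ : Ctx S) (x : ℕ) (U : UTy S) : Ctx S :=
  fun y => if y = x then some U else Γ y

def Ctx.fv {S : Type} (Γ : Ctx S) : Set (Bool × ℕ) :=
  {v | ∃ x U, Γ x = some U ∧ v ∈ UTy.fv U}

def Ctx.applySub {S : Type} (Γ : Ctx S) (s : TSub S) : Ctx S :=
  fun x => (Γ x).map (fun U => U.applySub s)
/- Sized typing judgement: `TypesN n Γ t T` means Γ ⊢ t : T has a derivation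
   with n sequents. -/
inductive TypesN {S : Type} [CommRing S] : ℕ → Ctx S → Term S → Ty S → Prop where
  | ax : Γ x = some U → TypesN 1 Γ (.var x) (.unit U)
  | equiv : TypesN n Γ t T → TEquiv T R → TypesN (n+1) Γ t R
  | arrI : TypesN n (Γ.update x U) t T → TypesN (n+1) Γ (.lam x t) (.unit (.arrow U T))
  | arrE (Xs : List (Bool × ℕ)) (U : UTy S) (L : List (S × Ty S)) (M : List (S × List (TSub S))) :
      L ≠ [] → M ≠ [] →
      (∀ q ∈ M, q.2.map TSub.var = Xs) →
      TypesN n Γ t (combo (L.map fun p => (p.1, Ty.unit (mkForalls Xs (.arrow U p.2))))) →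
      TypesN m Γ r (combo (M.map fun q => (q.1, (Ty.unit U).applySubs q.2))) →
      TypesN (n+m+1) Γ (.app t r)
        (combo (L.flatMap fun p => M.map fun q => (p.1 * q.1, p.2.applySubs q.2)))
  | fallI (L : List (S × UTy S)) (X : Bool × ℕ) :
      L ≠ [] → X ∉ Γ.fv →
      TypesN n Γ t (combo (L.map fun p => (p.1, Ty.unit p.2))) →
      TypesN (n+1) Γ t (combo (L.map fun p => (p.1, Ty.unit (mkForall X p.2))))
  | fallE (L : List (S × UTy S)) (s : TSub S) :
      L ≠ [] →
      TypesN n Γ t (combo (L.map fun p => (p.1, Ty.unit (mkForall s.var p.2)))) →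
      TypesN (n+1) Γ t (combo (L.map fun p => (p.1, (Ty.unit p.2).applySub s)))
  | addI : TypesN n Γ t T → TypesN m Γ r R → TypesN (n+m+1) Γ (.add t r) (.add T R)
  | oneE : TypesN n Γ (.smul 1 t) T → TypesN (n+1) Γ t T
  | sum (L : List (ℕ × S × Ty S)) :
      L ≠ [] →
      (∀ p ∈ L, TypesN p.1 Γ t p.2.2) →
      TypesN ((L.map Prod.fst).sum + 1) Γ (.smul (weightOf (L.map Prod.snd)) t)
        (combo (L.map Prod.snd))

/- the typing judgement Γ ⊢ t : T -/
def Types {S : Type} [CommRing S] (Γ : Ctx S) (t : Term S) (T : Ty S) : Prop :=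
  ∃ n, TypesN n Γ t T

/- the relation ≺_{X,Γ} -/
inductive Prec {S : Type} [CommRing S] (Γ : Ctx S) : (Bool × ℕ) → Ty S → Ty S → Prop where
  | intro (X : Bool × ℕ) (L : List (S × UTy S)) :
      X ∉ Γ.fv → L ≠ [] →
      TEquiv R (combo (L.map fun p => (p.1, Ty.unit p.2))) →
      TEquiv T (combo (L.map fun p => (p.1, Ty.unit (mkForall X p.2)))) →
      Prec Γ X R T
  | elim (s : TSub S) (L : List (S × UTy S)) :
      s.var ∉ Γ.fv → L ≠ [] →
      TEquiv R (combo (L.map fun p => (p.1, Ty.unit (mkForall s.var p.2)))) →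
      TEquiv T (combo (L.map fun p => (p.1, (Ty.unit p.2).applySub s))) →
      Prec Γ s.var R T

/- the relation ⪯_{𝒱,Γ} -/
inductive Preceq {S : Type} [CommRing S] (Γ : Ctx S) : Set (Bool × ℕ) → Ty S → Ty S → Prop where
  | prec : V ∩ Γ.fv = ∅ → Prec Γ X R T → Preceq Γ (V ∪ {X}) R T
  | trans : Preceq Γ V₁ A B → Preceq Γ V₂ B C → Preceq Γ (V₁ ∪ V₂) A C
  | equiv : V ∩ Γ.fv = ∅ → TEquiv R T → Preceq Γ V R T

/- the reduction relation → -/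
inductive Step {S : Type} [CommRing S] : Term S → Term S → Prop where
  -- Group E
  | oneSmul : Step (.smul 1 t) t
  | smulSmul : Step (.smul a (.smul b t)) (.smul (a*b) t)
  | smulAdd : Step (.smul a (.add t r)) (.add (.smul a t) (.smul a r))
  -- Group F
  | factor : Step (.add (.smul a t) (.smul b t)) (.smul (a+b) t)
  | factorOne : Step (.add (.smul a t) t) (.smul (a+1) t)
  | factorNone : Step (.add t t) (.smul (1+1) t)
  -- Group B
  | beta : IsBasis b → Step (.app (.lam x t) b) (t.subst x b)
  -- Group A
  | appAddL : Step (.app (.add t r) u) (.add (.app t u) (.app r u))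
  | appAddR : Step (.app t (.add r u)) (.add (.app t r) (.app t u))
  | appSmulL : Step (.app (.smul a t) r) (.smul a (.app t r))
  | appSmulR : Step (.app t (.smul a r)) (.smul a (.app t r))
  -- contextual rules
  | ctxSmul : Step t r → Step (.smul a t) (.smul a r)
  | ctxAddR : Step t r → Step (.add u t) (.add u r)
  | ctxAppR : Step t r → Step (.app u t) (.app u r)
  | ctxAppL : Step t r → Step (.app t u) (.app r u)
  | ctxLam : Step t r → Step (.lam x t) (.lam x r)

/- values: sums (in any association) of pairwise-distinct abstractions, possibly scaled -/
inductive SumOf {S : Type} : Term S → List (Term S) → Prop where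
  | leaf (t : Term S) : SumOf t [t]
  | add : SumOf t L → SumOf r M → SumOf (.add t r) (L ++ M)

inductive VEntry {S : Type} : Term S → Prop where
  | lam : VEntry (.lam x t)
  | smul : VEntry (.smul a (.lam x t))

def lamOf {S : Type} : Term S → Term S
  | .smul _ b => b
  | b => b

def IsValue {S : Type} (t : Term S) : Prop :=
  ∃ L : List (Term S), SumOf t L ∧ (∀ e ∈ L, VEntry e) ∧ (L.map lamOf).Pairwise (· ≠ ·)

/- weight of types and of terms -/
def Ty.weight {S : Type} [CommRing S] : Ty S → S
  | .unit _ => 1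
  | .gvar _ => 1
  | .smul a T => a * T.weight
  | .add T R => T.weight + R.weight

def Term.weight {S : Type} [CommRing S] : Term S → S
  | .var _ => 1
  | .lam _ _ => 1
  | .app _ _ => 1
  | .smul a t => a * t.weight
  | .add t r => t.weight + r.weight
section ArrowsAux
variable {S : Type} [CommRing S]

instance uSetoid : Setoid (UTy S) :=
  ⟨UEquiv, fun _ => UEquiv.refl _, UEquiv.symm, UEquiv.trans⟩

def ACcls (U : UTy S) : Quotient (uSetoid (S := S)) := Quotient.mk _ U

def ACsupp : Ty S → Set (Quotient (uSetoid (S := S)))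
  | .unit U => {ACcls U}
  | .smul _ T => ACsupp T
  | .add T R => ACsupp T ∪ ACsupp R
  | .gvar _ => ∅

def USim : UTy S → UTy S → Prop
  | .uvar n, .uvar m => n = m
  | .arrow U T, .arrow V R => UEquiv U V ∧ TEquiv T R
  | .fallU n U, .fallU m V => n = m ∧ UEquiv U V
  | .fallG n U, .fallG m V => n = m ∧ UEquiv U V
  | _, _ => False

theorem toSim {A B : UTy S} (h : UEquiv A B) : USim A B := by
  refine UEquiv.rec (motive_1 := fun A B _ => USim A B) (motive_2 := fun T R _ => TEquiv T R)
    ?_ ?_ ?_ ?_ ?_ ?_ ?_ ?_ ?_ ?_ ?_ ?_ ?_ ?_ ?_ ?_ ?_ ?_ ?_ h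
  · intro U
    cases U <;> first
      | exact rfl
      | exact ⟨UEquiv.refl _, TEquiv.refl _⟩
      | exact ⟨rfl, UEquiv.refl _⟩
  · intro U V a ih
    cases U <;> cases V <;> simp only [USim] at ih ⊢ <;>
      first
        | exact ih
        | exact ih.symm
        | exact ⟨ih.1.symm, ih.2.symm⟩
  · intro U V W a b ih1 ih2
    cases U <;> cases V <;> cases W <;> simp only [USim] at ih1 ih2 ⊢ <;>
      first
        | exact ih1
        | exact ih1.trans ih2
        | exact ⟨ih1.1.trans ih2.1, ih1.2.trans ih2.2⟩
  · intro U V T R a b ih1 ih2; exact ⟨a, b⟩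
  · intro U V X a ih; exact ⟨rfl, a⟩
  · intro U V X a ih; exact ⟨rfl, a⟩
  · intro T; exact TEquiv.refl T
  · intro T R a ih; exact ih.symm
  · intro T R P a b ih1 ih2; exact ih1.trans ih2
  · intro U V a ih; exact TEquiv.unit a
  · intro T R a h ih; exact TEquiv.smul ih
  · intro T R P a ih; exact TEquiv.addL ih
  · intro T R P a ih; exact TEquiv.addR ih
  · intro T; exact TEquiv.one_smul T
  · intro a b T; exact TEquiv.smul_smul
  · intro a T R; exact TEquiv.smul_add
  · intro a T b; exact TEquiv.add_smul
  · intro T R; exact TEquiv.comm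
  · intro T R P; exact TEquiv.assoc

theorem equiv_subst {A B : UTy S} (h : UEquiv A B) :
    ∀ s : TSub S, UEquiv (A.applySub s) (B.applySub s) := by
  refine UEquiv.rec (motive_1 := fun A B _ => ∀ s : TSub S, UEquiv (A.applySub s) (B.applySub s))
    (motive_2 := fun T R _ => ∀ s : TSub S, TEquiv (T.applySub s) (R.applySub s))
    ?_ ?_ ?_ ?_ ?_ ?_ ?_ ?_ ?_ ?_ ?_ ?_ ?_ ?_ ?_ ?_ ?_ ?_ ?_ h
  · intro U s; exact UEquiv.refl _
  · intro U V a ih s; exact (ih s).symm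
  · intro U V W a b ih1 ih2 s; exact (ih1 s).trans (ih2 s)
  · intro U V T R a b ih1 ih2 s
    cases s with
    | u X A =>
      simp only [UTy.applySub, UTy.substU]
      exact UEquiv.arrow (by simpa [UTy.applySub] using ih1 (TSub.u X A))
        (by simpa [Ty.applySub] using ih2 (TSub.u X A))
    | g X A =>
      simp only [UTy.applySub, UTy.substG]
      exact UEquiv.arrow (by simpa [UTy.applySub] using ih1 (TSub.g X A))
        (by simpa [Ty.applySub] using ih2 (TSub.g X A))
  · intro U V X a ih s
    cases s with
    | u Y A =>
      simp only [UTy.applySub, UTy.substU]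
      by_cases hXY : X = Y
      · simp only [if_pos hXY]; exact UEquiv.fallU a
      · simp only [if_neg hXY]
        exact UEquiv.fallU (by simpa [UTy.applySub] using ih (TSub.u Y A))
    | g Y A =>
      simp only [UTy.applySub, UTy.substG]
      exact UEquiv.fallU (by simpa [UTy.applySub] using ih (TSub.g Y A))
  · intro U V X a ih s
    cases s with
    | u Y A =>
      simp only [UTy.applySub, UTy.substU]
      exact UEquiv.fallG (by simpa [UTy.applySub] using ih (TSub.u Y A))
    | g Y A =>
      simp only [UTy.applySub, UTy.substG]
      by_cases hXY : X = Y
      · simp only [if_pos hXY]; exact UEquiv.fallG a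
      · simp only [if_neg hXY]
        exact UEquiv.fallG (by simpa [UTy.applySub] using ih (TSub.g Y A))
  · intro T s; exact TEquiv.refl _
  · intro T R a ih s; exact (ih s).symm
  · intro T R P a b ih1 ih2 s; exact (ih1 s).trans (ih2 s)
  · intro U V a ih s
    cases s with
    | u X A =>
      simp only [Ty.applySub, Ty.substU]
      exact TEquiv.unit (by simpa [UTy.applySub] using ih (TSub.u X A))
    | g X A =>
      simp only [Ty.applySub, Ty.substG]
      exact TEquiv.unit (by simpa [UTy.applySub] using ih (TSub.g X A))
  · intro T R a h ih s
    cases s with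
    | u X A =>
      simp only [Ty.applySub, Ty.substU]
      exact TEquiv.smul (by simpa [Ty.applySub] using ih (TSub.u X A))
    | g X A =>
      simp only [Ty.applySub, Ty.substG]
      exact TEquiv.smul (by simpa [Ty.applySub] using ih (TSub.g X A))
  · intro T R P a ih s
    cases s with
    | u X A =>
      simp only [Ty.applySub, Ty.substU]
      exact TEquiv.addL (by simpa [Ty.applySub] using ih (TSub.u X A))
    | g X A =>
      simp only [Ty.applySub, Ty.substG]
      exact TEquiv.addL (by simpa [Ty.applySub] using ih (TSub.g X A))
  · intro T R P a ih s
    cases s with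
    | u X A =>
      simp only [Ty.applySub, Ty.substU]
      exact TEquiv.addR (by simpa [Ty.applySub] using ih (TSub.u X A))
    | g X A =>
      simp only [Ty.applySub, Ty.substG]
      exact TEquiv.addR (by simpa [Ty.applySub] using ih (TSub.g X A))
  · intro T s
    cases s <;> simp only [Ty.applySub, Ty.substU, Ty.substG] <;> exact TEquiv.one_smul _
  · intro a b T s
    cases s <;> simp only [Ty.applySub, Ty.substU, Ty.substG] <;> exact TEquiv.smul_smul
  · intro a T R s
    cases s <;> simp only [Ty.applySub, Ty.substU, Ty.substG] <;> exact TEquiv.smul_add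
  · intro a T b s
    cases s <;> simp only [Ty.applySub, Ty.substU, Ty.substG] <;> exact TEquiv.add_smul
  · intro T R s
    cases s <;> simp only [Ty.applySub, Ty.substU, Ty.substG] <;> exact TEquiv.comm
  · intro T R P s
    cases s <;> simp only [Ty.applySub, Ty.substU, Ty.substG] <;> exact TEquiv.assoc

theorem supp_equiv {T R : Ty S} (h : TEquiv T R) : ACsupp T = ACsupp R := by
  have H : ∀ {T R : Ty S}, TEquiv T R → TEquiv T R ∧ ACsupp T = ACsupp R := by
    intro T R h
    refine TEquiv.rec (motive_1 := fun U V _ => UEquiv U V)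
      (motive_2 := fun T R _ => TEquiv T R ∧ ACsupp T = ACsupp R)
      ?_ ?_ ?_ ?_ ?_ ?_ ?_ ?_ ?_ ?_ ?_ ?_ ?_ ?_ ?_ ?_ ?_ ?_ ?_ h
    · intro U; exact UEquiv.refl U
    · intro U V a ih; exact ih.symm
    · intro U V W a b ih1 ih2; exact ih1.trans ih2
    · intro U V T R a b ih1 ih2; exact UEquiv.arrow ih1 ih2.1
    · intro U V X a ih; exact UEquiv.fallU ih
    · intro U V X a ih; exact UEquiv.fallG ih
    · intro T; exact ⟨TEquiv.refl T, rfl⟩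
    · intro T R a ih; exact ⟨ih.1.symm, ih.2.symm⟩
    · intro T R P a b ih1 ih2; exact ⟨ih1.1.trans ih2.1, ih1.2.trans ih2.2⟩
    · intro U V a ih
      refine ⟨TEquiv.unit a, ?_⟩
      simp only [ACsupp]
      exact congrArg (fun c => ({c} : Set _)) (Quotient.sound ih)
    · intro T R a h ih; exact ⟨TEquiv.smul ih.1, by simpa [ACsupp] using ih.2⟩
    · intro T R P a ih; exact ⟨TEquiv.addL ih.1, by simp [ACsupp, ih.2]⟩
    · intro T R P a ih; exact ⟨TEquiv.addR ih.1, by simp [ACsupp, ih.2]⟩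
    · intro T; exact ⟨TEquiv.one_smul T, by simp [ACsupp]⟩
    · intro a b T; exact ⟨TEquiv.smul_smul, by simp [ACsupp]⟩
    · intro a T R; exact ⟨TEquiv.smul_add, by simp [ACsupp]⟩
    · intro a T b; exact ⟨TEquiv.add_smul, by simp [ACsupp]⟩
    · intro T R; exact ⟨TEquiv.comm, Set.union_comm _ _⟩
    · intro T R P; exact ⟨TEquiv.assoc, (Set.union_assoc _ _ _).symm⟩
  exact (H h).2

theorem equiv_mkForall {U V : UTy S} (h : UEquiv U V) (X : Bool × ℕ) :
    UEquiv (mkForall X U) (mkForall X V) := by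
  cases X with
  | mk b n =>
    cases b
    · simpa [mkForall] using UEquiv.fallU h
    · simpa [mkForall] using UEquiv.fallG h

theorem mkForall_not_equiv_arrow (X : Bool × ℕ) (W V' : UTy S) (R' : Ty S)
    (h : UEquiv (mkForall X W) (.arrow V' R')) : False := by
  have hs := toSim h
  cases X with
  | mk b n => cases b <;> simp [mkForall, USim] at hs

theorem mkForall_equiv_body {X Y : Bool × ℕ} {W W' : UTy S}
    (h : UEquiv (mkForall X W) (mkForall Y W')) : UEquiv W W' := by
  have hs := toSim h
  cases X with
  | mk bx nx =>
    cases Y with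
    | mk by' ny =>
      cases bx <;> cases by' <;> simp [mkForall, USim] at hs <;> exact hs.2

theorem mem_supp_combo (c : Quotient (uSetoid (S := S))) :
    ∀ (L : List (S × Ty S)) (p : S × Ty S),
    (c ∈ ACsupp (combo (p :: L)) ↔ ∃ q ∈ p :: L, c ∈ ACsupp q.2) := by
  intro L
  induction L with
  | nil => intro p; simp [combo, ACsupp]
  | cons q M ih =>
    intro p
    have : combo (p :: q :: M) = Ty.add (Ty.smul p.1 p.2) (combo (q :: M)) := rfl
    rw [this]
    simp only [ACsupp, Set.mem_union, ih q, List.mem_cons]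
    constructor
    · rintro (hc | ⟨r, hr, hcr⟩)
      · exact ⟨p, Or.inl rfl, hc⟩
      · exact ⟨r, Or.inr hr, hcr⟩
    · rintro ⟨r, (rfl | hr), hcr⟩
      · exact Or.inl hcr
      · exact Or.inr ⟨r, hr, hcr⟩

theorem applySub_arrow (V : UTy S) (R : Ty S) (s : TSub S) :
    (UTy.arrow V R).applySub s = .arrow (V.applySub s) (R.applySub s) := by
  cases s <;> simp [UTy.applySub, Ty.applySub, UTy.substU, UTy.substG]

theorem applySub_unit (U : UTy S) (s : TSub S) :
    (Ty.unit U).applySub s = .unit (U.applySub s) := by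
  cases s <;> simp [Ty.applySub, UTy.applySub, Ty.substU, Ty.substG]

theorem applySubs_arrow (σ : List (TSub S)) : ∀ (V : UTy S) (R : Ty S),
    ∃ V' R', UTy.applySubs (.arrow V R) σ = .arrow V' R' := by
  induction σ with
  | nil => exact fun V R => ⟨V, R, rfl⟩
  | cons s σ ih =>
    intro V R
    have h1 : UTy.applySubs (.arrow V R) (s :: σ)
        = UTy.applySubs ((UTy.arrow V R).applySub s) σ := rfl
    rw [h1, applySub_arrow]
    exact ih _ _

theorem applySubs_append (W : UTy S) (σ : List (TSub S)) (s : TSub S) :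
    UTy.applySubs W (σ ++ [s]) = (UTy.applySubs W σ).applySub s := by
  simp [UTy.applySubs, List.foldl_append]

theorem subst_mkForalls (s : TSub S) : ∀ (Ys : List (Bool × ℕ)) (W : UTy S),
    (mkForalls Ys W).applySub s = mkForalls Ys (W.applySub s) ∨
    (mkForalls Ys W).applySub s = mkForalls Ys W := by
  intro Ys
  induction Ys with
  | nil => intro W; left; rfl
  | cons y Ys ih =>
    intro W
    cases y with
    | mk b n =>
      cases b
      · -- binder is fallU n
        have hshape : mkForalls ((false, n) :: Ys) W = .fallU n (mkForalls Ys W) := by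
          simp [mkForalls, mkForall]
        cases s with
        | u X A =>
          by_cases hnX : n = X
          · right
            rw [hshape]
            simp [UTy.applySub, UTy.substU, if_pos hnX]
          · rcases ih W with h' | h'
            · left
              rw [hshape]
              simp only [UTy.applySub, UTy.substU, if_neg hnX]
              rw [show (mkForalls Ys W).substU X A = (mkForalls Ys W).applySub (TSub.u X A) from rfl, h']
              rfl
            · right
              rw [hshape]
              simp only [UTy.applySub, UTy.substU, if_neg hnX]
              rw [show (mkForalls Ys W).substU X A = (mkForalls Ys W).applySub (TSub.u X A) from rfl, h']
        | g X A =>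
          rcases ih W with h' | h'
          · left
            rw [hshape]
            simp only [UTy.applySub, UTy.substG]
            rw [show (mkForalls Ys W).substG X A = (mkForalls Ys W).applySub (TSub.g X A) from rfl, h']
            rfl
          · right
            rw [hshape]
            simp only [UTy.applySub, UTy.substG]
            rw [show (mkForalls Ys W).substG X A = (mkForalls Ys W).applySub (TSub.g X A) from rfl, h']
      · -- binder is fallG n
        have hshape : mkForalls ((true, n) :: Ys) W = .fallG n (mkForalls Ys W) := by
          simp [mkForalls, mkForall]
        cases s with
        | g X A =>
          by_cases hnX : n = X
          · right
            rw [hshape]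
            simp [UTy.applySub, UTy.substG, if_pos hnX]
          · rcases ih W with h' | h'
            · left
              rw [hshape]
              simp only [UTy.applySub, UTy.substG, if_neg hnX]
              rw [show (mkForalls Ys W).substG X A = (mkForalls Ys W).applySub (TSub.g X A) from rfl, h']
              rfl
            · right
              rw [hshape]
              simp only [UTy.applySub, UTy.substG, if_neg hnX]
              rw [show (mkForalls Ys W).substG X A = (mkForalls Ys W).applySub (TSub.g X A) from rfl, h']
        | u X A =>
          rcases ih W with h' | h'
          · left
            rw [hshape]
            simp only [UTy.applySub, UTy.substU]
            rw [show (mkForalls Ys W).substU X A = (mkForalls Ys W).applySub (TSub.u X A) from rfl, h']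
            rfl
          · right
            rw [hshape]
            simp only [UTy.applySub, UTy.substU]
            rw [show (mkForalls Ys W).substU X A = (mkForalls Ys W).applySub (TSub.u X A) from rfl, h']

def Nice (Γ : Ctx S) (V : UTy S) (R : Ty S) (c : Quotient (uSetoid (S := S))) : Prop :=
  ∃ (Ys : List (Bool × ℕ)) (σ : List (TSub S)),
    (∀ y ∈ Ys, y ∉ Γ.fv) ∧ (∀ s ∈ σ, TSub.var s ∉ Γ.fv) ∧
    c = ACcls (mkForalls Ys (UTy.applySubs (.arrow V R) σ))

theorem foralls_inv : ∀ (Xs : List (Bool × ℕ)) (Ys : List (Bool × ℕ)) (U V1 : UTy S)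
    (T R1 : Ty S),
    UEquiv (mkForalls Xs (.arrow U T)) (mkForalls Ys (.arrow V1 R1)) →
    UEquiv (.arrow U T) (.arrow V1 R1) := by
  intro Xs
  induction Xs with
  | nil =>
    intro Ys U V1 T R1 h
    cases Ys with
    | nil => exact h
    | cons y Ys => exact (mkForall_not_equiv_arrow y _ _ _ h.symm).elim
  | cons x Xs ih =>
    intro Ys U V1 T R1 h
    cases Ys with
    | nil => exact (mkForall_not_equiv_arrow x _ _ _ h).elim
    | cons y Ys => exact ih Ys U V1 T R1 (mkForall_equiv_body h)

theorem mem_supp_combo_map {α : Type} (c : Quotient (uSetoid (S := S)))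
    (f : α → S × Ty S) (l : List α) (a : α) :
    c ∈ ACsupp (combo ((a :: l).map f)) ↔ ∃ x ∈ a :: l, c ∈ ACsupp ((f x).2) := by
  rw [List.map_cons, mem_supp_combo]
  constructor
  · rintro ⟨q, hq, hcq⟩
    rcases List.mem_cons.1 hq with rfl | hq
    · exact ⟨a, List.mem_cons_self, hcq⟩
    · obtain ⟨x, hx, rfl⟩ := List.mem_map.1 hq
      exact ⟨x, List.mem_cons_of_mem _ hx, hcq⟩
  · rintro ⟨x, hx, hcx⟩
    rcases List.mem_cons.1 hx with rfl | hx
    · exact ⟨f x, List.mem_cons_self, hcx⟩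
    · exact ⟨f x, List.mem_cons_of_mem _ (List.mem_map_of_mem hx), hcx⟩

theorem prec_nice {Γ : Ctx S} {V : UTy S} {R : Ty S} {X : Bool × ℕ} {A B : Ty S}
    (h : Prec Γ X A B) (hA : ∀ c ∈ ACsupp A, Nice Γ V R c) :
    ∀ c ∈ ACsupp B, Nice Γ V R c := by
  cases h with
  | intro X L hX hL hRA hTB =>
    intro c hc
    rw [supp_equiv hTB] at hc
    cases L with
    | nil => exact absurd rfl hL
    | cons p0 L' =>
      rw [mem_supp_combo_map] at hc
      obtain ⟨p, hp, hcq⟩ := hc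
      simp only [ACsupp, Set.mem_singleton_iff] at hcq
      -- now get Nice for ACcls p.2 from hA
      have hmem : ACcls p.2 ∈ ACsupp A := by
        rw [supp_equiv hRA, mem_supp_combo_map]
        exact ⟨p, hp, by simp [ACsupp]⟩
      obtain ⟨Ys, σ, hYs, hσ, heq⟩ := hA _ hmem
      have hequiv : UEquiv p.2 (mkForalls Ys (UTy.applySubs (.arrow V R) σ)) :=
        Quotient.exact heq
      refine ⟨X :: Ys, σ, ?_, hσ, ?_⟩
      · intro y hy
        rcases List.mem_cons.1 hy with rfl | hy
        · exact hX
        · exact hYs y hy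
      · rw [hcq]
        exact Quotient.sound (equiv_mkForall hequiv X)
  | elim s L hs hL hRA hTB =>
    intro c hc
    rw [supp_equiv hTB] at hc
    cases L with
    | nil => exact absurd rfl hL
    | cons p0 L' =>
      rw [mem_supp_combo_map] at hc
      obtain ⟨p, hp, hcq⟩ := hc
      rw [show ((fun q => (q.1, (Ty.unit q.2).applySub s)) p).2 = (Ty.unit p.2).applySub s
        from rfl, applySub_unit] at hcq
      simp only [ACsupp, Set.mem_singleton_iff] at hcq
      have hmem : ACcls (mkForall s.var p.2) ∈ ACsupp A := by
        rw [supp_equiv hRA, mem_supp_combo_map]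
        exact ⟨p, hp, by simp [ACsupp]⟩
      obtain ⟨Ys, σ, hYs, hσ, heq⟩ := hA _ hmem
      have hequiv : UEquiv (mkForall s.var p.2) (mkForalls Ys (UTy.applySubs (.arrow V R) σ)) :=
        Quotient.exact heq
      cases Ys with
      | nil =>
        obtain ⟨V', R', hVR⟩ := applySubs_arrow σ V R
        rw [show mkForalls [] (UTy.applySubs (.arrow V R) σ) = UTy.applySubs (.arrow V R) σ
          from rfl, hVR] at hequiv
        exact (mkForall_not_equiv_arrow _ _ _ _ hequiv).elim
      | cons y Ys' =>
        have hbody : UEquiv p.2 (mkForalls Ys' (UTy.applySubs (.arrow V R) σ)) :=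
          mkForall_equiv_body hequiv
        have hsub := equiv_subst hbody s
        have hYs' : ∀ y' ∈ Ys', y' ∉ Γ.fv := fun y' hy' => hYs y' (List.mem_cons_of_mem _ hy')
        rcases subst_mkForalls s Ys' (UTy.applySubs (.arrow V R) σ) with h' | h'
        · refine ⟨Ys', σ ++ [s], hYs', ?_, ?_⟩
          · intro t ht
            rcases List.mem_append.1 ht with ht | ht
            · exact hσ t ht
            · rcases List.mem_singleton.1 ht with rfl
              exact hs
          · rw [hcq]
            refine Quotient.sound ?_
            rw [applySubs_append]
            rw [h'] at hsub
            exact hsub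
        · refine ⟨Ys', σ, hYs', hσ, ?_⟩
          · rw [hcq]
            refine Quotient.sound ?_
            rw [h'] at hsub
            exact hsub

theorem preceq_nice {Γ : Ctx S} {V : UTy S} {R : Ty S} {𝒱 : Set (Bool × ℕ)} {A B : Ty S}
    (h : Preceq Γ 𝒱 A B) :
    (∀ c ∈ ACsupp A, Nice Γ V R c) → ∀ c ∈ ACsupp B, Nice Γ V R c := by
  induction h with
  | prec hV hp => exact prec_nice hp
  | trans h1 h2 ih1 ih2 => exact fun hA => ih2 (ih1 hA)
  | equiv hV he => intro hA; rw [← supp_equiv he]; exact hA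

end ArrowsAux

/- STATEMENT 6: Arrows comparison -/
theorem arrows_comparison {S : Type} [CommRing S]
    (Γ : Ctx S) (𝒱 : Set (Bool × ℕ)) (V : UTy S) (R : Ty S)
    (Xs : List (Bool × ℕ)) (U : UTy S) (T : Ty S)
    (h : Preceq Γ 𝒱 (Ty.unit (.arrow V R)) (Ty.unit (mkForalls Xs (.arrow U T)))) :
    ∃ σ : List (TSub S),
      (∀ s ∈ σ, TSub.var s ∉ Γ.fv) ∧
      UEquiv (UTy.arrow U T) ((UTy.arrow V R).applySubs σ) := by
  have base : ∀ c ∈ ACsupp (Ty.unit (UTy.arrow V R)), Nice Γ V R c := by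
    intro c hc
    simp only [ACsupp, Set.mem_singleton_iff] at hc
    exact ⟨[], [], by simp, by simp, hc⟩
  have hN := preceq_nice h base (ACcls (mkForalls Xs (.arrow U T)))
    (by simp [ACsupp, Set.mem_singleton_iff])
  obtain ⟨Ys, σ, hYs, hσ, hc⟩ := hN
  have he : UEquiv (mkForalls Xs (.arrow U T)) (mkForalls Ys (UTy.applySubs (.arrow V R) σ)) :=
    Quotient.exact hc
  obtain ⟨V', R', hVR⟩ := applySubs_arrow σ V R
  rw [hVR] at he
  refine ⟨σ, hσ, ?_⟩
  rw [show (UTy.arrow V R).applySubs σ = .arrow V' R' from hVR]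
  exact foralls_inv Xs Ys U V' T R' he
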